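/- Let α ∈ [0,1] be a real number and let 𝒢 be a finite group of order n ≥ 3. Let b be the number of vertices of the power graph P(𝒢) that are adjacent to every other vertex of P(𝒢). Then αn − 1 is an eigenvalue of A_α(P(𝒢)) whose eigenspace has dimension at least b − 1. -/

import Mathlib

open Matrix Polynomial BigOperators

/-- The generalized adjacency matrix `A_α(G) = α·D(G) + (1−α)·A(G)`. -/
noncomputable def Aalpha {V : Type*} [Fintype V] (G : SimpleGraph V) (α : ℝ) :
    Matrix V V ℝ :=
  letI := Classical.decEq V
  letI := Classical.decRel G.Adj
  α • Matrix.diagonal (fun v => (G.degree v : ℝ)) + (1 - α) • G.adjMatrix ℝ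

/-- `μ` is an eigenvalue of the real matrix `M`. -/
def Matrix.IsEigenvalue {n : Type*} [Fintype n] (M : Matrix n n ℝ) (μ : ℝ) : Prop :=
  ∃ v : n → ℝ, v ≠ 0 ∧ M.mulVec v = μ • v

/-- The dimension of the eigenspace of a real matrix `M` for the value `μ`. -/
noncomputable def eigMult {n : Type*} [Fintype n] (M : Matrix n n ℝ) (μ : ℝ) : ℕ :=
  letI := Classical.decEq n
  Module.finrank ℝ (Module.End.eigenspace (Matrix.toLin' M) μ)

/-- The joined union `G[G_1, …, G_n]`. -/
def joinedUnion {n : ℕ} (G : SimpleGraph (Fin n)) (V : Fin n → Type*)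
    (Gs : ∀ i, SimpleGraph (V i)) : SimpleGraph (Σ i, V i) :=
  SimpleGraph.fromRel (fun x y =>
    if h : x.1 = y.1 then (Gs y.1).Adj (h ▸ x.2) y.2 else G.Adj x.1 y.1)

/-- The join `G ∇ H` of two graphs. -/
def graphJoin {V W : Type*} (G : SimpleGraph V) (H : SimpleGraph W) :
    SimpleGraph (V ⊕ W) :=
  SimpleGraph.fromRel (fun x y =>
    match x, y with
    | Sum.inl a, Sum.inl b => G.Adj a b
    | Sum.inr a, Sum.inr b => H.Adj a b
    | _, _ => True)

/-- The disjoint union `G ∪ H` of two graphs. -/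
def disjUnion {V W : Type*} (G : SimpleGraph V) (H : SimpleGraph W) :
    SimpleGraph (V ⊕ W) :=
  SimpleGraph.fromRel (fun x y =>
    match x, y with
    | Sum.inl a, Sum.inl b => G.Adj a b
    | Sum.inr a, Sum.inr b => H.Adj a b
    | _, _ => False)

/-- Degree of a vertex (classical version). -/
noncomputable def gdegree {V : Type*} [Fintype V] (G : SimpleGraph V) (v : V) : ℕ :=
  letI := Classical.decEq V
  letI := Classical.decRel G.Adj
  G.degree v

/-- The power graph of a group. -/
def powerGraph (G : Type*) [Group G] : SimpleGraph G :=
  SimpleGraph.fromRel (fun x y => ∃ k : ℕ, 0 < k ∧ y = x ^ k)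

/-- A dominating vertex has degree `|V| - 1`. -/
lemma dom_degree' {V : Type*} [Fintype V] (H : SimpleGraph V) (u : V)
    [Fintype (H.neighborSet u)] (hu : ∀ w : V, w ≠ u → H.Adj u w) :
    H.degree u = Fintype.card V - 1 := by
  classical
  have h : H.neighborFinset u = Finset.univ.erase u := by
    ext w
    simp only [SimpleGraph.mem_neighborFinset, Finset.mem_erase, Finset.mem_univ, and_true]
    exact ⟨fun h => (H.ne_of_adj h).symm, fun h => hu w h⟩
  rw [SimpleGraph.degree, h, Finset.card_erase_of_mem (Finset.mem_univ u), Finset.card_univ]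

/-- The difference of indicator vectors of two dominating vertices is an eigenvector for
`α n - 1`. -/
lemma dom_eigenvec {V : Type*} [Fintype V] [DecidableEq V] (H : SimpleGraph V) (α : ℝ)
    (u v : V) (hu : ∀ w : V, w ≠ u → H.Adj u w) (hv : ∀ w : V, w ≠ v → H.Adj v w)
    (huv : u ≠ v) :
    (Aalpha H α).mulVec ((Pi.single u 1 : V → ℝ) - Pi.single v 1)
      = (α * (Fintype.card V : ℝ) - 1) • ((Pi.single u 1 : V → ℝ) - Pi.single v 1) := by
  classical
  have hcard : 1 ≤ Fintype.card V := Fintype.card_pos_iff.mpr ⟨u⟩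
  have hdeg : ∀ (w : V) (inst : Fintype (H.neighborSet w)), (∀ x : V, x ≠ w → H.Adj w x) →
      ((@SimpleGraph.degree V H w inst : ℕ) : ℝ) = (Fintype.card V : ℝ) - 1 := by
    intro w inst hw
    rw [dom_degree' H w hw, Nat.cast_sub hcard, Nat.cast_one]
  have hadjuv : H.Adj u v := hu v (Ne.symm huv)
  have hadjvu : H.Adj v u := hv u huv
  funext w
  rw [Matrix.mulVec_sub, Matrix.mulVec_single_one, Matrix.mulVec_single_one]
  simp only [Pi.sub_apply, Pi.smul_apply, Pi.single_apply, smul_eq_mul, mul_one, Matrix.col_apply]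
  have hAentry : ∀ x : V, Aalpha H α w x =
      α * (if w = x then ((letI := Classical.decEq V; letI := Classical.decRel H.Adj;
        H.degree w : ℕ) : ℝ) else 0) + (1 - α) * (if H.Adj w x then 1 else 0) := by
    intro x
    simp only [Aalpha, Matrix.add_apply, Matrix.smul_apply, Matrix.diagonal_apply,
      SimpleGraph.adjMatrix_apply, smul_eq_mul]
    congr!
  rw [hAentry u, hAentry v]
  by_cases hwu : w = u
  · subst hwu
    have h1 : ¬ w = v := huv
    rw [hdeg w _ hu]
    simp only [if_pos rfl, if_neg h1, if_neg (H.irrefl (v := w) : ¬H.Adj w w),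
      if_pos hadjuv, if_true]
    ring
  · by_cases hwv : w = v
    · subst hwv
      rw [hdeg w _ hv]
      simp only [if_pos rfl, if_neg hwu, if_neg (H.irrefl (v := w) : ¬H.Adj w w),
        if_pos hadjvu, if_true]
      have : ¬ w = u := hwu
      ring
    · have h1 : H.Adj w u := (hu w hwu).symm
      have h2 : H.Adj w v := (hv w hwv).symm
      simp only [if_neg hwu, if_neg hwv, if_pos h1, if_pos h2]
      ring

/-- Linearly independent eigenvectors give a lower bound on `eigMult`. -/
lemma eigMult_ge {n : Type*} [Fintype n] (M : Matrix n n ℝ) (μ : ℝ) {ι : Type*} [Fintype ι]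
    (f : ι → (n → ℝ)) (hf : ∀ i, M.mulVec (f i) = μ • f i) (hl : LinearIndependent ℝ f) :
    Fintype.card ι ≤ eigMult M μ := by
  letI := Classical.decEq n
  set E := Module.End.eigenspace (Matrix.toLin' M) μ with hE
  have hmem : ∀ i, f i ∈ E := fun i =>
    Module.End.mem_eigenspace_iff.mpr (by rw [Matrix.toLin'_apply]; exact hf i)
  have hl2 : LinearIndependent ℝ (fun i => (⟨f i, hmem i⟩ : E)) := by
    apply LinearIndependent.of_comp E.subtype
    exact hl
  exact hl2.fintype_card_le_finrank

/-- `αn − 1` is an eigenvalue of the power graph of a finite group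
of order `n ≥ 3`, with eigenspace of dimension at least `b − 1`, where `b` is the
number of vertices adjacent to every other vertex. -/
theorem stmt_12 {α : ℝ} (hα : α ∈ Set.Icc (0 : ℝ) 1)
    (G : Type) [Group G] [Fintype G] (hn : 3 ≤ Fintype.card G)
    (b : ℕ) (hb : b = Nat.card {v : G | ∀ w : G, w ≠ v → (powerGraph G).Adj v w}) :
    b - 1 ≤ eigMult (Aalpha (powerGraph G) α) (α * (Fintype.card G : ℝ) - 1) := by
  classical
  set S : Set G := {v : G | ∀ w : G, w ≠ v → (powerGraph G).Adj v w} with hS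
  rcases Nat.eq_zero_or_pos b with h0 | hbpos
  · simp [h0]
  have hSne : S.Nonempty := by
    rw [hb] at hbpos
    have : Nonempty ↥S := (Nat.card_pos_iff.mp hbpos).1
    exact Set.nonempty_coe_sort.mp this
  obtain ⟨v₀, hv₀⟩ := hSne
  set ι := {v : G // v ∈ S ∧ v ≠ v₀} with hι
  set f : ι → (G → ℝ) := fun v => (Pi.single v.1 1 : G → ℝ) - Pi.single v₀ 1 with hf
  have heig : ∀ i : ι, (Aalpha (powerGraph G) α).mulVec (f i)
      = (α * (Fintype.card G : ℝ) - 1) • (f i) := fun i =>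
    dom_eigenvec (powerGraph G) α i.1 v₀ i.2.1 hv₀ i.2.2
  have hlin : LinearIndependent ℝ f := by
    rw [Fintype.linearIndependent_iff]
    intro c hc i
    have h := congrFun hc (i : G)
    simp only [hf, Finset.sum_apply, Pi.smul_apply, Pi.sub_apply, Pi.single_apply,
      smul_eq_mul, Pi.zero_apply] at h
    have hnv0 : ¬ ((i : G) = v₀) := i.2.2
    have h1 : ∀ j : ι, c j * ((if (i : G) = (j : G) then (1 : ℝ) else 0)
        - (if (i : G) = v₀ then 1 else 0)) = if j = i then c j else 0 := by
      intro j
      by_cases hji : j = i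
      · subst hji; simp [hnv0]
      · have : ¬ ((i : G) = (j : G)) := fun he => hji (Subtype.ext he.symm)
        simp [hji, hnv0, this]
    rw [Finset.sum_congr rfl (fun j _ => h1 j), Finset.sum_ite_eq' Finset.univ i c] at h
    simpa using h
  have hcι : Fintype.card ι = b - 1 := by
    have h1 : Fintype.card ι = (S.toFinset.erase v₀).card := by
      rw [Fintype.card_subtype]
      congr 1
      ext w
      simp [Finset.mem_erase, Set.mem_toFinset, and_comm]
    have h2 : b = S.toFinset.card := by
      rw [hb, Nat.card_eq_fintype_card, Set.toFinset_card]
    rw [h1, Finset.card_erase_of_mem (Set.mem_toFinset.mpr hv₀), ← h2]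
  calc b - 1 = Fintype.card ι := hcι.symm
    _ ≤ _ := eigMult_ge _ _ f heig hlin
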